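/- arXiv:2310.12734 — 7 statements merged into one kernel-verified Lean document; each statement's English description precedes it below -/
import Mathlib

section
/- Let A and B be complex polynomials with deg A = N ≥ 1, deg B = K ≥ 1, ‖A‖ ≤ 1, ‖B‖ ≤ 1, and δ := δ(A,B) > 0. Then the sub-level sets L(A, δ/3^N) := {z ∈ ℂ : |A(z)| < δ/3^N} and L(B, δ/3^K) := {z ∈ ℂ : |B(z)| < δ/3^K} are disjoint. -/
open Polynomial

/-- The norm of a polynomial: the maximum of the moduli of its coefficients. -/
noncomputable def polyNorm (p : Polynomial ℂ) : ℝ :=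
  ⨆ k : ℕ, ‖p.coeff k‖

/-- `δ(A,B)`: the minimum of `|A(z)| + |B(z)|` over all `z` that is a zero of `A` or of `B`. -/
noncomputable def bezoutDelta (A B : Polynomial ℂ) : ℝ :=
  sInf ((fun z : ℂ => ‖A.eval z‖ + ‖B.eval z‖) ''
    {z : ℂ | A.eval z = 0 ∨ B.eval z = 0})

lemma multiset_prod_map_le {ι : Type*} (s : Multiset ι) (f g : ι → ℝ)
    (h0 : ∀ i ∈ s, 0 ≤ f i) (h : ∀ i ∈ s, f i ≤ g i) :
    (s.map f).prod ≤ (s.map g).prod := by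
  induction s using Multiset.induction with
  | empty => simp
  | cons a t ih =>
    simp only [Multiset.map_cons, Multiset.prod_cons]
    have hf : 0 ≤ (t.map f).prod := Multiset.prod_nonneg (by
      intro x hx; obtain ⟨i, hi, rfl⟩ := Multiset.mem_map.mp hx
      exact h0 i (Multiset.mem_cons_of_mem hi))
    exact mul_le_mul (h a (Multiset.mem_cons_self a t))
      (ih (fun i hi => h0 i (Multiset.mem_cons_of_mem hi))
          (fun i hi => h i (Multiset.mem_cons_of_mem hi))) hf
      (le_trans (h0 a (Multiset.mem_cons_self a t)) (h a (Multiset.mem_cons_self a t)))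

lemma abs_eval_eq (B : Polynomial ℂ) (α : ℂ) :
    ‖B.eval α‖
      = ‖B.leadingCoeff‖ * ((B.roots.map (fun β => ‖α - β‖)).prod) := by
  conv_lhs => rw [← C_leadingCoeff_mul_prod_multiset_X_sub_C (splits_iff_card_roots.mp (IsAlgClosed.splits B))]
  rw [eval_mul, eval_C, norm_mul, eval_multiset_prod, Multiset.map_map]
  congr 1
  exact (map_multiset_prod (normHom : ℂ →*₀ ℝ) _).trans (by simp [Multiset.map_map, Function.comp])

lemma aux (B : Polynomial ℂ) (z α : ℂ)
    (hmin : ∀ β ∈ B.roots, ‖z - α‖ ≤ ‖z - β‖) :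
    ‖B.eval α‖ ≤ 2 ^ B.natDegree * ‖B.eval z‖ := by
  rw [abs_eval_eq B α, abs_eval_eq B z]
  have hcard : Multiset.card B.roots = B.natDegree :=
    splits_iff_card_roots.mp (IsAlgClosed.splits B)
  have h1 : ((B.roots.map (fun β => ‖α - β‖)).prod)
      ≤ ((B.roots.map (fun β => 2 * ‖z - β‖)).prod) := by
    apply multiset_prod_map_le
    · intro β _; exact norm_nonneg _
    · intro β hβ
      calc ‖α - β‖ ≤ ‖α - z‖ + ‖z - β‖ := by
            simpa using norm_sub_le_norm_sub_add_norm_sub α z β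
        _ ≤ 2 * ‖z - β‖ := by
            have h := hmin β hβ
            have : ‖α - z‖ = ‖z - α‖ := by
              exact norm_sub_rev α z
            linarith
  have h2 : ((B.roots.map (fun β => 2 * ‖z - β‖)).prod)
      = 2 ^ B.natDegree * ((B.roots.map (fun β => ‖z - β‖)).prod) := by
    rw [Multiset.prod_map_mul]
    congr 1
    simp [Multiset.map_const', hcard]
  rw [h2] at h1
  calc ‖B.leadingCoeff‖ * ((B.roots.map (fun β => ‖α - β‖)).prod)
      ≤ ‖B.leadingCoeff‖ * (2 ^ B.natDegree * ((B.roots.map (fun β => ‖z - β‖)).prod)) :=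
        mul_le_mul_of_nonneg_left h1 (norm_nonneg _)
    _ = 2 ^ B.natDegree * (‖B.leadingCoeff‖ * ((B.roots.map (fun β => ‖z - β‖)).prod)) := by ring


lemma bezoutDelta_comm (A B : Polynomial ℂ) : bezoutDelta B A = bezoutDelta A B := by
  unfold bezoutDelta
  congr 1
  ext r
  simp only [Set.mem_image, Set.mem_setOf_eq]
  constructor <;> rintro ⟨z, hz, rfl⟩ <;> exact ⟨z, Or.symm hz, add_comm _ _⟩

lemma bddBelow_delta (A B : Polynomial ℂ) :
    BddBelow ((fun z : ℂ => ‖A.eval z‖ + ‖B.eval z‖) ''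
      {z : ℂ | A.eval z = 0 ∨ B.eval z = 0}) := by
  refine ⟨0, ?_⟩
  rintro x ⟨w, _, rfl⟩
  positivity

lemma main_case (A B : Polynomial ℂ) (hK : 1 ≤ B.natDegree) (z α : ℂ)
    (hαroot : A.eval α = 0)
    (hmin : ∀ β ∈ B.roots, ‖z - α‖ ≤ ‖z - β‖)
    (h2 : ‖B.eval z‖ < bezoutDelta A B / 3 ^ B.natDegree)
    (hδ : 0 < bezoutDelta A B) : False := by
  set δ := bezoutDelta A B with hδdef
  have hle1 : δ ≤ ‖A.eval α‖ + ‖B.eval α‖ :=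
    csInf_le (bddBelow_delta A B) ⟨α, Or.inl hαroot, rfl⟩
  rw [hαroot] at hle1
  simp only [norm_zero, zero_add] at hle1
  have hle2 := aux B z α hmin
  have h3 : (0:ℝ) < 3 ^ B.natDegree := by positivity
  have key : δ ≤ 2 ^ B.natDegree * (δ / 3 ^ B.natDegree) := by
    calc δ ≤ ‖B.eval α‖ := hle1
      _ ≤ 2 ^ B.natDegree * ‖B.eval z‖ := hle2
      _ ≤ 2 ^ B.natDegree * (δ / 3 ^ B.natDegree) := by
          apply mul_le_mul_of_nonneg_left h2.le (by positivity)
  have hfrac : ((2:ℝ)/3) ^ B.natDegree < 1 :=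
    pow_lt_one₀ (by norm_num) (by norm_num) (by omega)
  have : 2 ^ B.natDegree * (δ / 3 ^ B.natDegree) = ((2:ℝ)/3) ^ B.natDegree * δ := by
    rw [div_pow]; field_simp
  rw [this] at key
  nlinarith


/-- **Separation lemma.** If `deg A = N ≥ 1`, `deg B = K ≥ 1`, `‖A‖ ≤ 1`, `‖B‖ ≤ 1` and
`δ := δ(A,B) > 0`, then the sub-level sets `L(A, δ/3^N)` and `L(B, δ/3^K)` are disjoint. -/
theorem sublevel_sets_disjoint (N K : ℕ) (hN : 1 ≤ N) (hK : 1 ≤ K)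
    (A B : Polynomial ℂ) (hA : A.natDegree = N) (hB : B.natDegree = K)
    (hnA : polyNorm A ≤ 1) (hnB : polyNorm B ≤ 1)
    (hδ : 0 < bezoutDelta A B) :
    {z : ℂ | ‖A.eval z‖ < bezoutDelta A B / 3 ^ N} ∩
      {z : ℂ | ‖B.eval z‖ < bezoutDelta A B / 3 ^ K} = ∅ := by
  subst hA hB
  rw [Set.eq_empty_iff_forall_notMem]
  rintro z ⟨h1, h2⟩
  simp only [Set.mem_setOf_eq] at h1 h2
  have hA0 : A ≠ 0 := fun h => by simp [h] at hN
  have hB0 : B ≠ 0 := fun h => by simp [h] at hK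
  have hAcard : Multiset.card A.roots = A.natDegree :=
    splits_iff_card_roots.mp (IsAlgClosed.splits A)
  have hBcard : Multiset.card B.roots = B.natDegree :=
    splits_iff_card_roots.mp (IsAlgClosed.splits B)
  have hAne : A.roots.toFinset.Nonempty := by
    rw [Multiset.toFinset_nonempty]
    intro h; rw [h] at hAcard; simp at hAcard; omega
  have hBne : B.roots.toFinset.Nonempty := by
    rw [Multiset.toFinset_nonempty]
    intro h; rw [h] at hBcard; simp at hBcard; omega
  obtain ⟨α, hαmem, hαmin⟩ := Finset.exists_min_image A.roots.toFinset
    (fun w => ‖z - w‖) hAne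
  obtain ⟨β, hβmem, hβmin⟩ := Finset.exists_min_image B.roots.toFinset
    (fun w => ‖z - w‖) hBne
  have hαroot : A.eval α = 0 :=
    (mem_roots hA0).mp (Multiset.mem_toFinset.mp hαmem)
  have hβroot : B.eval β = 0 :=
    (mem_roots hB0).mp (Multiset.mem_toFinset.mp hβmem)
  rcases le_total (‖z - α‖) (‖z - β‖) with hc | hc
  · exact main_case A B hK z α hαroot
      (fun β' hβ' => le_trans hc (hβmin β' (Multiset.mem_toFinset.mpr hβ')))
      h2 hδ
  · refine main_case B A hN z β hβroot
      (fun α' hα' => le_trans hc (hαmin α' (Multiset.mem_toFinset.mpr hα')))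
      ?_ ?_ <;> rw [bezoutDelta_comm]
    · exact h1
    · exact hδ
end

section
/- Let A and B be complex polynomials with deg A = N ≥ 1, deg B = K ≥ 1, ‖A‖ ≤ 1, ‖B‖ ≤ 1, and δ(A,B) > 0. Then for every z ∈ ℂ, either |A(z)| ≥ δ(A,B)/3^N or |B(z)| ≥ δ(A,B)/3^K. -/
open Polynomial

lemma abs_eval_le_of_roots (P : Polynomial ℂ) (w z : ℂ)
    (h : ∀ r ∈ P.roots, ‖w - r‖ ≤ 3 * ‖z - r‖) :
    ‖P.eval w‖ ≤ 3 ^ P.natDegree * ‖P.eval z‖ := by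
  have hs : P.Splits := IsAlgClosed.splits P
  have hcard : P.roots.card = P.natDegree := (splits_iff_card_roots).1 hs
  by_cases hP : P = 0
  · simp [hP]
  have heq := hs.eq_prod_roots
  have hev : ∀ u : ℂ, ‖P.eval u‖
      = ‖P.leadingCoeff‖ * (P.roots.map (fun r => ‖u - r‖)).prod := by
    intro u
    conv_lhs => rw [heq]
    rw [eval_mul, eval_C, norm_mul, eval_multiset_prod, Multiset.map_map,
      (fun s : Multiset ℂ => by induction s using Multiset.induction_on <;> simp [*] :
        ∀ s : Multiset ℂ, ‖s.prod‖ = (s.map (fun x => ‖x‖)).prod), Multiset.map_map]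
    simp [Function.comp]
  rw [hev w, hev z]
  have h1 : (P.roots.map (fun r => ‖w - r‖)).prod
      ≤ (P.roots.map (fun r => 3 * ‖z - r‖)).prod := by
    apply Multiset.prod_map_le_prod_map₀
    · intro i _; positivity
    · exact h
  have h2 : (P.roots.map (fun r => 3 * ‖z - r‖)).prod
      = 3 ^ P.natDegree * (P.roots.map (fun r => ‖z - r‖)).prod := by
    rw [← hcard, Multiset.prod_map_mul]
    congr 1
    simp [Multiset.map_const']
  calc ‖P.leadingCoeff‖ * (P.roots.map (fun r => ‖w - r‖)).prod
      ≤ ‖P.leadingCoeff‖ * (P.roots.map (fun r => 3 * ‖z - r‖)).prod := by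
        apply mul_le_mul_of_nonneg_left h1 (by positivity)
    _ = 3 ^ P.natDegree * (‖P.leadingCoeff‖ * (P.roots.map (fun r => ‖z - r‖)).prod) := by
        rw [h2]; ring

lemma bezoutDelta_le_left (A B : Polynomial ℂ) (β : ℂ) (hβ : B.eval β = 0) :
    bezoutDelta A B ≤ ‖A.eval β‖ := by
  have : bezoutDelta A B ≤ ‖A.eval β‖ + ‖B.eval β‖ := by
    apply csInf_le
    · exact ⟨0, by rintro x ⟨u, _, rfl⟩; positivity⟩
    · exact ⟨β, Or.inr hβ, rfl⟩
  simpa [hβ] using this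

lemma bezoutDelta_le_right (A B : Polynomial ℂ) (α : ℂ) (hα : A.eval α = 0) :
    bezoutDelta A B ≤ ‖B.eval α‖ := by
  have : bezoutDelta A B ≤ ‖A.eval α‖ + ‖B.eval α‖ := by
    apply csInf_le
    · exact ⟨0, by rintro x ⟨u, _, rfl⟩; positivity⟩
    · exact ⟨α, Or.inl hα, rfl⟩
  simpa [hα] using this

/-- If `deg A = N ≥ 1`, `deg B = K ≥ 1`, `‖A‖ ≤ 1`, `‖B‖ ≤ 1` and `δ(A,B) > 0`, then for
every `z ∈ ℂ` either `|A(z)| ≥ δ(A,B)/3^N` or `|B(z)| ≥ δ(A,B)/3^K`. -/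
theorem lower_bound_everywhere (N K : ℕ) (hN : 1 ≤ N) (hK : 1 ≤ K)
    (A B : Polynomial ℂ) (hA : A.natDegree = N) (hB : B.natDegree = K)
    (hnA : polyNorm A ≤ 1) (hnB : polyNorm B ≤ 1)
    (hδ : 0 < bezoutDelta A B) :
    ∀ z : ℂ,
      bezoutDelta A B / 3 ^ N ≤ ‖A.eval z‖ ∨
      bezoutDelta A B / 3 ^ K ≤ ‖B.eval z‖ := by
  intro z
  have hA0 : A ≠ 0 := fun h => by simp [h] at hA; omega
  have hcardA : A.roots.card = N := by
    rw [(splits_iff_card_roots).1 (IsAlgClosed.splits A), hA]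
  have hne : A.roots.toFinset.Nonempty := by
    rw [Multiset.toFinset_nonempty, ← Multiset.card_pos, hcardA]; omega
  obtain ⟨α₀, hα₀mem, hα₀min⟩ :=
    A.roots.toFinset.exists_min_image (fun r => ‖z - r‖) hne
  rw [Multiset.mem_toFinset] at hα₀mem
  have hα₀min' : ∀ r ∈ A.roots, ‖z - α₀‖ ≤ ‖z - r‖ := by
    intro r hr; exact hα₀min r (Multiset.mem_toFinset.2 hr)
  set d := ‖z - α₀‖ with hd
  by_cases hcase : ∃ β ∈ B.roots, ‖z - β‖ < 2 * d
  · left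
    obtain ⟨β, hβmem, hβlt⟩ := hcase
    have hβ0 : B.eval β = 0 := (mem_roots (by intro h; simp [h] at hB; omega)).1 hβmem
    have key : ‖A.eval β‖ ≤ 3 ^ N * ‖A.eval z‖ := by
      rw [← hA]
      apply abs_eval_le_of_roots
      intro r hr
      have h1 : ‖β - r‖ ≤ ‖β - z‖ + ‖z - r‖ := by
        simpa using norm_add_le (β - z) (z - r)
      have h2 : ‖β - z‖ = ‖z - β‖ := by
        rw [← norm_neg]; ring_nf
      have h3 : d ≤ ‖z - r‖ := hα₀min' r hr
      nlinarith [norm_nonneg (z - r)]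
    have hδle : bezoutDelta A B ≤ 3 ^ N * ‖A.eval z‖ :=
      le_trans (bezoutDelta_le_left A B β hβ0) key
    rw [div_le_iff₀ (by positivity)]
    linarith
  · right
    push_neg at hcase
    have hα₀0 : A.eval α₀ = 0 := (mem_roots hA0).1 hα₀mem
    have key : ‖B.eval α₀‖ ≤ 3 ^ K * ‖B.eval z‖ := by
      rw [← hB]
      apply abs_eval_le_of_roots
      intro r hr
      have h1 : ‖α₀ - r‖ ≤ ‖α₀ - z‖ + ‖z - r‖ := by
        simpa using norm_add_le (α₀ - z) (z - r)
      have h2 : ‖α₀ - z‖ = d := by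
        rw [hd, ← norm_neg]; ring_nf
      have h3 : 2 * d ≤ ‖z - r‖ := hcase r hr
      nlinarith [norm_nonneg (z - r)]
    have hδle : bezoutDelta A B ≤ 3 ^ K * ‖B.eval z‖ :=
      le_trans (bezoutDelta_le_right A B α₀ hα₀0) key
    rw [div_le_iff₀ (by positivity)]
    linarith
end

section
/- For all integers N, K ≥ 1 there exists a constant T > 0, depending only on N and K, such that δ(A,B) ≤ T for all complex polynomials A of degree N and B of degree K with no common zeros and with ‖A‖ ≤ 1 and ‖B‖ ≤ 1. -/
open Polynomial

lemma coeff_le_polyNorm (p : Polynomial ℂ) (n : ℕ) :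
    ‖p.coeff n‖ ≤ polyNorm p := by
  have hb : BddAbove (Set.range fun k => ‖p.coeff k‖) := by
    refine ⟨∑ i ∈ Finset.range (p.natDegree + 1), ‖p.coeff i‖, ?_⟩
    rintro x ⟨k, rfl⟩
    show ‖p.coeff k‖ ≤ _
    by_cases hk : k ≤ p.natDegree
    · exact Finset.single_le_sum (fun i _ => (norm_nonneg _))
        (Finset.mem_range.2 (Nat.lt_succ_of_le hk))
    · rw [p.coeff_eq_zero_of_natDegree_lt (lt_of_not_ge hk)]
      simp only [norm_zero]
      exact Finset.sum_nonneg fun i _ => norm_nonneg _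
  exact le_ciSup hb n

lemma key (A B : Polynomial ℂ) (hnB : polyNorm B ≤ 1) (α : ℂ) (hα : A.eval α = 0)
    (hmin : ∀ b ∈ B.roots, ‖α‖ ≤ ‖b‖) :
    bezoutDelta A B ≤ 2 ^ B.natDegree := by
  have hsplit := IsAlgClosed.splits B
  have hBeq := hsplit.eq_prod_roots
  -- |B(α)| ≤ 2^natDegree * |B(0)|
  have heval : ∀ z : ℂ, ‖B.eval z‖
      = ‖B.leadingCoeff‖ * (B.roots.map fun b => ‖z - b‖).prod := by
    intro z
    conv_lhs => rw [hBeq]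
    rw [eval_mul, eval_C, norm_mul, eval_multiset_prod]
    congr 1
    rw [show ∀ m : Multiset ℂ, ‖m.prod‖ = (m.map (‖·‖)).prod from
      fun m => map_multiset_prod (normHom (α := ℂ)) m, Multiset.map_map, Multiset.map_map]
    congr 1
    ext b
    simp
  have h1 : (B.roots.map fun b => ‖α - b‖).prod
      ≤ (B.roots.map fun b => 2 * ‖0 - b‖).prod := by
    apply Multiset.prod_map_le_prod_map₀
    · intro b _; exact norm_nonneg _
    · intro b hb
      calc ‖α - b‖ ≤ ‖α‖ + ‖b‖ := by
            simpa using norm_sub_le α b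
        _ ≤ 2 * ‖0 - b‖ := by
            have := hmin b hb
            simp only [zero_sub, norm_neg]
            linarith
  have h2 : (B.roots.map fun b => 2 * ‖0 - b‖).prod
      = 2 ^ Multiset.card B.roots * (B.roots.map fun b => ‖0 - b‖).prod := by
    rw [show (fun b : ℂ => 2 * ‖0 - b‖)
        = fun b : ℂ => (fun _ : ℂ => (2:ℝ)) b * (fun b : ℂ => ‖0 - b‖) b from rfl,
      Multiset.prod_map_mul, Multiset.map_const', Multiset.prod_replicate]
  have hBα : ‖B.eval α‖ ≤ 2 ^ B.natDegree * ‖B.eval 0‖ := by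
    rw [heval α, heval 0]
    calc ‖B.leadingCoeff‖ * (B.roots.map fun b => ‖α - b‖).prod
        ≤ ‖B.leadingCoeff‖ *
          (2 ^ Multiset.card B.roots * (B.roots.map fun b => ‖0 - b‖).prod) := by
          rw [← h2]; exact mul_le_mul_of_nonneg_left h1 (norm_nonneg _)
      _ ≤ 2 ^ B.natDegree *
          (‖B.leadingCoeff‖ * (B.roots.map fun b => ‖0 - b‖).prod) := by
          rw [mul_left_comm]
          apply mul_le_mul_of_nonneg_right
          · exact pow_le_pow_right₀ one_le_two B.card_roots'
          · exact mul_nonneg (norm_nonneg _)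
              (Multiset.prod_nonneg (by
                intro x hx
                obtain ⟨b, _, rfl⟩ := Multiset.mem_map.1 hx
                exact norm_nonneg _))
  have hB0 : ‖B.eval 0‖ ≤ 1 := by
    rw [← coeff_zero_eq_eval_zero]
    exact le_trans (coeff_le_polyNorm B 0) hnB
  have hmem : ‖A.eval α‖ + ‖B.eval α‖ ∈
      ((fun z : ℂ => ‖A.eval z‖ + ‖B.eval z‖) ''
        {z : ℂ | A.eval z = 0 ∨ B.eval z = 0}) := ⟨α, Or.inl hα, rfl⟩
  have hbdd : BddBelow ((fun z : ℂ => ‖A.eval z‖ + ‖B.eval z‖) ''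
      {z : ℂ | A.eval z = 0 ∨ B.eval z = 0}) := by
    refine ⟨0, ?_⟩
    rintro x ⟨z, _, rfl⟩
    positivity
  calc bezoutDelta A B ≤ ‖A.eval α‖ + ‖B.eval α‖ :=
        csInf_le hbdd hmem
    _ = ‖B.eval α‖ := by rw [hα]; simp
    _ ≤ 2 ^ B.natDegree * 1 := le_trans hBα
        (mul_le_mul_of_nonneg_left hB0 (by positivity))
    _ = 2 ^ B.natDegree := mul_one _

/-- **Boundedness of `δ`.** For all `N, K ≥ 1` there is a constant `T > 0` depending only on
`N` and `K` such that `δ(A,B) ≤ T` for all polynomials `A` of degree `N` and `B` of degree `K`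
with no common zeros and `‖A‖ ≤ 1`, `‖B‖ ≤ 1`. -/
theorem delta_bounded (N K : ℕ) (hN : 1 ≤ N) (hK : 1 ≤ K) :
    ∃ T : ℝ, 0 < T ∧
      ∀ A B : Polynomial ℂ,
        A.natDegree = N → B.natDegree = K →
        (∀ z : ℂ, ¬(A.eval z = 0 ∧ B.eval z = 0)) →
        polyNorm A ≤ 1 → polyNorm B ≤ 1 →
        bezoutDelta A B ≤ T := by
  refine ⟨2 ^ N + 2 ^ K, by positivity, ?_⟩
  intro A B hAd hBd _ hnA hnB
  have hA0 : A ≠ 0 := fun h => by simp [h] at hAd; omega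
  have hB0 : B ≠ 0 := fun h => by simp [h] at hBd; omega
  obtain ⟨α, hα⟩ := Complex.exists_root (f := A)
    (by rw [degree_eq_natDegree hA0, hAd]; exact_mod_cast Nat.lt_of_lt_of_le Nat.zero_lt_one hN)
  obtain ⟨β, hβ⟩ := Complex.exists_root (f := B)
    (by rw [degree_eq_natDegree hB0, hBd]; exact_mod_cast Nat.lt_of_lt_of_le Nat.zero_lt_one hK)
  -- min modulus roots
  obtain ⟨a, haR, hamin⟩ := A.roots.toFinset.exists_min_image (fun z : ℂ => ‖z‖)
    ⟨α, Multiset.mem_toFinset.2 ((mem_roots hA0).2 hα)⟩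
  obtain ⟨b, hbR, hbmin⟩ := B.roots.toFinset.exists_min_image (fun z : ℂ => ‖z‖)
    ⟨β, Multiset.mem_toFinset.2 ((mem_roots hB0).2 hβ)⟩
  have ha' : A.eval a = 0 := (isRoot_of_mem_roots (Multiset.mem_toFinset.1 haR))
  have hb' : B.eval b = 0 := (isRoot_of_mem_roots (Multiset.mem_toFinset.1 hbR))
  rcases le_total ‖a‖ ‖b‖ with h | h
  · have := key A B hnB a ha' (fun r hr =>
      le_trans h (hbmin r (Multiset.mem_toFinset.2 hr)))
    rw [hBd] at this
    refine le_trans this ?_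
    have : (0:ℝ) < 2 ^ N := by positivity
    linarith
  · have := key B A hnA b hb' (fun r hr =>
      le_trans h (hamin r (Multiset.mem_toFinset.2 hr)))
    rw [hAd, bezoutDelta_comm] at this
    refine le_trans this ?_
    have : (0:ℝ) < 2 ^ K := by positivity
    linarith
end

section
/- Let A be a complex polynomial of degree N ≥ 1 and B a complex polynomial of degree K ≥ 1 with ‖A‖ ≤ 1 and ‖B‖ ≤ 1. Then there exist sequences of complex polynomials (A_n) of degree N and (B_n) of degree K such that: (i) each A_n and each B_n has only simple roots; (ii) ‖A_n‖ ≤ 1 and ‖B_n‖ ≤ 1 for all n; (iii) A_n → A and B_n → B coefficientwise as n → ∞; and (iv) δ(A_n, B_n) → δ(A, B), where δ(P,Q) denotes the minimum of |P(z)| + |Q(z)| over all z that is a root of P or of Q. -/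
open Polynomial Filter

/- ### Auxiliary lemmas -/

lemma bddAbove_abs_coeff (p : Polynomial ℂ) :
    BddAbove (Set.range fun k => ‖p.coeff k‖) := by
  apply Set.Finite.bddAbove
  apply Set.Finite.subset (Set.Finite.union (Set.finite_singleton 0)
    ((Set.finite_Iic p.natDegree).image fun k => ‖p.coeff k‖))
  rintro x ⟨k, rfl⟩
  rcases le_or_gt k p.natDegree with h | h
  · exact Or.inr ⟨k, h, rfl⟩
  · exact Or.inl (by simp [Polynomial.coeff_eq_zero_of_natDegree_lt h])

lemma abs_coeff_le_polyNorm (p : Polynomial ℂ) (k : ℕ) :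
    ‖p.coeff k‖ ≤ polyNorm p :=
  le_ciSup (bddAbove_abs_coeff p) k

lemma polyNorm_le_one {p : Polynomial ℂ} (h : ∀ k, ‖p.coeff k‖ ≤ 1) :
    polyNorm p ≤ 1 := ciSup_le h

lemma coeff_X_sub_C_mul' (b : ℂ) (q : Polynomial ℂ) (k : ℕ) :
    ((X - C b) * q).coeff k = (if k = 0 then 0 else q.coeff (k-1)) - b * q.coeff k := by
  rw [sub_mul, Polynomial.coeff_sub, Polynomial.coeff_C_mul]
  cases k with
  | zero => simp [Polynomial.mul_coeff_zero]
  | succ k => simp [Polynomial.coeff_X_mul]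

lemma continuous_coeff_prod {ι : Type*} (s : Finset ι) (g : ι → ℝ → ℂ)
    (hg : ∀ i, Continuous (g i)) :
    ∀ k : ℕ, Continuous fun η => (∏ i ∈ s, (X - C (g i η))).coeff k := by
  induction s using Finset.cons_induction with
  | empty => intro k; simpa [Polynomial.coeff_one] using
      (continuous_const (y := if k = 0 then (1:ℂ) else 0))
  | cons a s hni ih =>
    intro k
    simp only [Finset.prod_cons, coeff_X_sub_C_mul']
    cases k with
    | zero => simp; exact ((hg a).mul (ih 0)).neg
    | succ k => simp; exact ((ih k).sub ((hg _).mul (ih (k+1))))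

lemma continuous_finset_inf'' {ι : Type*} {s : Finset ι} (hs : s.Nonempty) {f : ι → ℝ → ℝ}
    (hf : ∀ i, Continuous (f i)) : Continuous fun η => s.inf' hs fun i => f i η := by
  induction hs using Finset.Nonempty.cons_induction with
  | singleton a => simp only [Finset.inf'_singleton]; exact hf a
  | cons a s h hs ih =>
    have : (fun η => (Finset.cons a s h).inf' (Finset.cons_nonempty h) fun i => f i η)
        = fun η => min (f a η) (s.inf' hs fun i => f i η) := by
      funext η; rw [Finset.inf'_cons]
    rw [this]; exact (hf a).min ih

lemma continuous_finset_sup'' {ι : Type*} {s : Finset ι} (hs : s.Nonempty) {f : ι → ℝ → ℝ}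
    (hf : ∀ i, Continuous (f i)) : Continuous fun η => s.sup' hs fun i => f i η := by
  induction hs using Finset.Nonempty.cons_induction with
  | singleton a => simp only [Finset.sup'_singleton]; exact hf a
  | cons a s h hs ih =>
    have : (fun η => (Finset.cons a s h).sup' (Finset.cons_nonempty h) fun i => f i η)
        = fun η => max (f a η) (s.sup' hs fun i => f i η) := by
      funext η; rw [Finset.sup'_cons]
    rw [this]; exact (hf a).max ih

/- ### The perturbed polynomials -/

noncomputable def pertPoly (c : ℂ) {M : ℕ} (r : Fin M → ℂ) (η : ℝ) : Polynomial ℂ :=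
  C c * ∏ i : Fin M, (X - C (r i + (i : ℕ) * (η : ℂ)))

lemma pert_natDegree {c : ℂ} (hc : c ≠ 0) {M : ℕ} (r : Fin M → ℂ) (η : ℝ) :
    (pertPoly c r η).natDegree = M := by
  rw [pertPoly, Polynomial.natDegree_C_mul hc,
    Polynomial.natDegree_prod _ _ (fun i _ => Polynomial.X_sub_C_ne_zero _)]
  simp only [Polynomial.natDegree_X_sub_C, Finset.sum_const, smul_eq_mul, mul_one,
    Finset.card_univ, Fintype.card_fin]

lemma pert_ne_zero {c : ℂ} (hc : c ≠ 0) {M : ℕ} (r : Fin M → ℂ) (η : ℝ) :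
    pertPoly c r η ≠ 0 := by
  apply mul_ne_zero (by simpa using hc)
  exact Finset.prod_ne_zero_iff.mpr fun i _ => Polynomial.X_sub_C_ne_zero _

lemma pert_roots {c : ℂ} (hc : c ≠ 0) {M : ℕ} (r : Fin M → ℂ) (η : ℝ) :
    (pertPoly c r η).roots
      = Multiset.map (fun i => r i + (i : ℕ) * (η : ℂ)) Finset.univ.val := by
  rw [pertPoly, Polynomial.roots_C_mul _ hc, Finset.prod_eq_multiset_prod]
  have : (fun i : Fin M => X - C (r i + (i : ℕ) * (η : ℂ)))
      = (fun a => X - C a) ∘ (fun i : Fin M => r i + (i : ℕ) * (η : ℂ)) := rfl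
  rw [this, ← Multiset.map_map, Polynomial.roots_multiset_prod_X_sub_C]

lemma pert_root_iff {c : ℂ} (hc : c ≠ 0) {M : ℕ} (r : Fin M → ℂ) (η : ℝ) (z : ℂ) :
    (pertPoly c r η).eval z = 0 ↔ ∃ i : Fin M, r i + (i : ℕ) * (η : ℂ) = z := by
  constructor
  · intro h
    have : z ∈ (pertPoly c r η).roots := by
      rw [Polynomial.mem_roots']; exact ⟨pert_ne_zero hc r η, h⟩
    rw [pert_roots hc] at this
    obtain ⟨i, _, hi⟩ := Multiset.mem_map.mp this
    exact ⟨i, hi⟩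
  · rintro ⟨i, rfl⟩
    have : (r i + (i : ℕ) * (η : ℂ)) ∈ (pertPoly c r η).roots := by
      rw [pert_roots hc]
      exact Multiset.mem_map.mpr ⟨i, Finset.mem_univ_val i, rfl⟩
    exact (Polynomial.mem_roots'.mp this).2

lemma pert_coeff_continuous (c : ℂ) {M : ℕ} (r : Fin M → ℂ) (k : ℕ) :
    Continuous fun η => (pertPoly c r η).coeff k := by
  simp only [pertPoly, Polynomial.coeff_C_mul]
  exact continuous_const.mul
    (continuous_coeff_prod Finset.univ (fun i η => r i + (i : ℕ) * (η : ℂ))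
      (fun i => by fun_prop) k)

lemma pert_eval_continuous (c : ℂ) {M : ℕ} (r : Fin M → ℂ) (w a : ℂ) :
    Continuous fun η : ℝ => (pertPoly c r η).eval (w + a * (η : ℂ)) := by
  simp only [pertPoly, Polynomial.eval_mul, Polynomial.eval_C, Polynomial.eval_prod,
    Polynomial.eval_sub, Polynomial.eval_X]
  exact continuous_const.mul (continuous_finset_prod _ fun i _ => by fun_prop)

lemma pert_zero (c : ℂ) {M : ℕ} (r : Fin M → ℂ) :
    pertPoly c r 0 = C c * ∏ i : Fin M, (X - C (r i)) := by
  simp [pertPoly]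

lemma enum_prod_roots (A : Polynomial ℂ) :
    C A.leadingCoeff * ∏ i : Fin A.roots.toList.length, (X - C (A.roots.toList.get i)) = A := by
  have hsplit : A.Splits := IsAlgClosed.splits A
  have h1 : ∏ i : Fin A.roots.toList.length, (X - C (A.roots.toList.get i))
      = (A.roots.toList.map fun a => X - C a).prod := by
    rw [← List.prod_ofFn]
    congr 1
    rw [show (fun i => X - C (A.roots.toList.get i))
        = (fun a => X - C a) ∘ A.roots.toList.get from rfl, ← List.map_ofFn, List.ofFn_get]
  rw [h1]
  have h2 : (Multiset.map (fun a => X - C a) A.roots).prod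
      = (A.roots.toList.map fun a => X - C a).prod := by
    conv_lhs => rw [← Multiset.coe_toList A.roots]
    rw [Multiset.map_coe, Multiset.prod_coe]
  rw [← h2, ← hsplit.eq_prod_roots]

/- ### The scaled perturbed polynomials -/

noncomputable def pertNorm (c : ℂ) {M : ℕ} (r : Fin M → ℂ) (η : ℝ) : ℝ :=
  (Finset.range (M+1)).sup' Finset.nonempty_range_add_one
    fun k => ‖(pertPoly c r η).coeff k‖

noncomputable def pertScale (c : ℂ) {M : ℕ} (r : Fin M → ℂ) (η : ℝ) : ℝ :=
  (max 1 (pertNorm c r η))⁻¹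

noncomputable def scaledPert (c : ℂ) {M : ℕ} (r : Fin M → ℂ) (η : ℝ) : Polynomial ℂ :=
  C ((pertScale c r η : ℝ) : ℂ) * pertPoly c r η

lemma max_pertNorm_pos (c : ℂ) {M : ℕ} (r : Fin M → ℂ) (η : ℝ) :
    (0:ℝ) < max 1 (pertNorm c r η) := lt_of_lt_of_le one_pos (le_max_left _ _)

lemma pertScale_pos (c : ℂ) {M : ℕ} (r : Fin M → ℂ) (η : ℝ) : 0 < pertScale c r η := by
  rw [pertScale]; exact inv_pos.mpr (max_pertNorm_pos c r η)

lemma pertScale_ne_zero' (c : ℂ) {M : ℕ} (r : Fin M → ℂ) (η : ℝ) :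
    ((pertScale c r η : ℝ) : ℂ) ≠ 0 := by
  simpa using (pertScale_pos c r η).ne'

lemma scaled_natDegree {c : ℂ} (hc : c ≠ 0) {M : ℕ} (r : Fin M → ℂ) (η : ℝ) :
    (scaledPert c r η).natDegree = M := by
  rw [scaledPert, Polynomial.natDegree_C_mul (pertScale_ne_zero' c r η), pert_natDegree hc]

lemma scaled_polyNorm_le {c : ℂ} (hc : c ≠ 0) {M : ℕ} (r : Fin M → ℂ) (η : ℝ) :
    polyNorm (scaledPert c r η) ≤ 1 := by
  apply polyNorm_le_one
  intro k
  rw [scaledPert, Polynomial.coeff_C_mul, norm_mul,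
    Complex.norm_of_nonneg (pertScale_pos c r η).le]
  rcases le_or_gt k M with h | h
  · have h1 : ‖(pertPoly c r η).coeff k‖ ≤ max 1 (pertNorm c r η) := by
      refine le_trans ?_ (le_max_right _ _)
      exact Finset.le_sup' (fun k => ‖(pertPoly c r η).coeff k‖)
        (Finset.mem_range.mpr (by omega))
    calc pertScale c r η * ‖(pertPoly c r η).coeff k‖
        ≤ pertScale c r η * max 1 (pertNorm c r η) :=
          mul_le_mul_of_nonneg_left h1 (pertScale_pos c r η).le
      _ = 1 := inv_mul_cancel₀ (max_pertNorm_pos c r η).ne'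
  · rw [Polynomial.coeff_eq_zero_of_natDegree_lt (by rw [pert_natDegree hc]; exact h)]
    simp

lemma scaled_roots {c : ℂ} (hc : c ≠ 0) {M : ℕ} (r : Fin M → ℂ) (η : ℝ) :
    (scaledPert c r η).roots
      = Multiset.map (fun i => r i + (i : ℕ) * (η : ℂ)) Finset.univ.val := by
  rw [scaledPert, Polynomial.roots_C_mul _ (pertScale_ne_zero' c r η), pert_roots hc]

lemma scaled_root_iff {c : ℂ} (hc : c ≠ 0) {M : ℕ} (r : Fin M → ℂ) (η : ℝ) (z : ℂ) :
    (scaledPert c r η).eval z = 0 ↔ ∃ i : Fin M, r i + (i : ℕ) * (η : ℂ) = z := by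
  rw [scaledPert, Polynomial.eval_mul, Polynomial.eval_C,
    mul_eq_zero, or_iff_right (pertScale_ne_zero' c r η)]
  exact pert_root_iff hc r η z

lemma pertNorm_continuous (c : ℂ) {M : ℕ} (r : Fin M → ℂ) :
    Continuous (pertNorm c r) :=
  continuous_finset_sup'' Finset.nonempty_range_add_one
    fun k => continuous_norm.comp (pert_coeff_continuous c r k)

lemma pertScale_continuous (c : ℂ) {M : ℕ} (r : Fin M → ℂ) :
    Continuous (pertScale c r) :=
  (continuous_const.max (pertNorm_continuous c r)).inv₀
    fun η => (max_pertNorm_pos c r η).ne'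

lemma scaled_coeff_continuous (c : ℂ) {M : ℕ} (r : Fin M → ℂ) (k : ℕ) :
    Continuous fun η => (scaledPert c r η).coeff k := by
  simp only [scaledPert, Polynomial.coeff_C_mul]
  exact (Complex.continuous_ofReal.comp (pertScale_continuous c r)).mul
    (pert_coeff_continuous c r k)

lemma scaled_eval_continuous (c : ℂ) {M : ℕ} (r : Fin M → ℂ) (w a : ℂ) :
    Continuous fun η : ℝ => (scaledPert c r η).eval (w + a * (η : ℂ)) := by
  simp only [scaledPert, Polynomial.eval_mul, Polynomial.eval_C]
  exact (Complex.continuous_ofReal.comp (pertScale_continuous c r)).mul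
    (pert_eval_continuous c r w a)

lemma scaled_zero {c : ℂ} {M : ℕ} {r : Fin M → ℂ} {A : Polynomial ℂ}
    (h0 : pertPoly c r 0 = A) (hnA : polyNorm A ≤ 1) :
    scaledPert c r 0 = A := by
  have hν : pertNorm c r 0 ≤ 1 := by
    apply Finset.sup'_le
    intro k _
    rw [h0]
    exact le_trans (abs_coeff_le_polyNorm A k) hnA
  rw [scaledPert, pertScale, max_eq_left hν, h0]
  simp

/-- **Reduction lemma.** Any `A` of degree `N ≥ 1` and `B` of degree `K ≥ 1` with
`‖A‖ ≤ 1`, `‖B‖ ≤ 1` can be approximated coefficientwise by polynomials `Aₙ`, `Bₙ` of the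
same degrees with only simple roots, with `‖Aₙ‖ ≤ 1`, `‖Bₙ‖ ≤ 1` and
`δ(Aₙ, Bₙ) → δ(A, B)`. -/
theorem approximation_simple_roots (N K : ℕ) (hN : 1 ≤ N) (hK : 1 ≤ K)
    (A B : Polynomial ℂ) (hA : A.natDegree = N) (hB : B.natDegree = K)
    (hnA : polyNorm A ≤ 1) (hnB : polyNorm B ≤ 1) :
    ∃ An Bn : ℕ → Polynomial ℂ,
      (∀ n, (An n).natDegree = N) ∧ (∀ n, (Bn n).natDegree = K) ∧
      (∀ n, (An n).roots.Nodup) ∧ (∀ n, (Bn n).roots.Nodup) ∧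
      (∀ n, polyNorm (An n) ≤ 1) ∧ (∀ n, polyNorm (Bn n) ≤ 1) ∧
      (∀ k : ℕ, Tendsto (fun n => (An n).coeff k) atTop (nhds (A.coeff k))) ∧
      (∀ k : ℕ, Tendsto (fun n => (Bn n).coeff k) atTop (nhds (B.coeff k))) ∧
      Tendsto (fun n => bezoutDelta (An n) (Bn n)) atTop (nhds (bezoutDelta A B)) := by
  have hA0 : A ≠ 0 := fun h => by rw [h, Polynomial.natDegree_zero] at hA; omega
  have hB0 : B ≠ 0 := fun h => by rw [h, Polynomial.natDegree_zero] at hB; omega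
  set c := A.leadingCoeff with hc_def
  set d := B.leadingCoeff with hd_def
  have hc : c ≠ 0 := Polynomial.leadingCoeff_ne_zero.mpr hA0
  have hd : d ≠ 0 := Polynomial.leadingCoeff_ne_zero.mpr hB0
  set MA := A.roots.toList.length with hMA_def
  set MB := B.roots.toList.length with hMB_def
  have hMA : MA = N := by
    rw [hMA_def, Multiset.length_toList,
      (Polynomial.splits_iff_card_roots).mp (IsAlgClosed.splits A), hA]
  have hMB : MB = K := by
    rw [hMB_def, Multiset.length_toList,
      (Polynomial.splits_iff_card_roots).mp (IsAlgClosed.splits B), hB]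
  set r : Fin MA → ℂ := fun i => A.roots.toList.get i with hr_def
  set t : Fin MB → ℂ := fun j => B.roots.toList.get j with ht_def
  have hA_eq : pertPoly c r 0 = A := by rw [pert_zero]; exact enum_prod_roots A
  have hB_eq : pertPoly d t 0 = B := by rw [pert_zero]; exact enum_prod_roots B
  haveI instA : Nonempty (Fin MA) := Fin.pos_iff_nonempty.mp (by omega)
  haveI instB : Nonempty (Fin MB) := Fin.pos_iff_nonempty.mp (by omega)
  -- bad sets of parameters at which the perturbed roots collide
  have hbadFin : ∀ {M : ℕ} (s : Fin M → ℂ),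
      (⋃ p : Fin M × Fin M, {η : ℝ | p.1 ≠ p.2 ∧
        s p.1 + (p.1 : ℕ) * (η:ℂ) = s p.2 + (p.2 : ℕ) * (η:ℂ)}).Finite := by
    intro M s
    apply Set.finite_iUnion
    intro p
    apply Set.Subsingleton.finite
    rintro η1 ⟨hp, h1⟩ η2 ⟨-, h2⟩
    have hab : ((p.1 : ℕ) : ℂ) ≠ ((p.2 : ℕ) : ℂ) :=
      fun h => hp (Fin.ext (Nat.cast_injective h))
    have key : (((p.1:ℕ):ℂ) - ((p.2:ℕ):ℂ)) * (η1:ℂ)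
        = (((p.1:ℕ):ℂ) - ((p.2:ℕ):ℂ)) * (η2:ℂ) := by
      linear_combination h1 - h2
    exact Complex.ofReal_inj.mp (mul_left_cancel₀ (sub_ne_zero.mpr hab) key)
  set badA := ⋃ p : Fin MA × Fin MA, {η : ℝ | p.1 ≠ p.2 ∧
      r p.1 + (p.1 : ℕ) * (η:ℂ) = r p.2 + (p.2 : ℕ) * (η:ℂ)} with hbadA_def
  set badB := ⋃ p : Fin MB × Fin MB, {η : ℝ | p.1 ≠ p.2 ∧
      t p.1 + (p.1 : ℕ) * (η:ℂ) = t p.2 + (p.2 : ℕ) * (η:ℂ)} with hbadB_def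
  -- choice of the parameters
  have hchoice : ∀ n : ℕ, ∃ η : ℝ,
      η ∈ Set.Ioo (0:ℝ) (1/(n+1)) \ (badA ∪ badB) := fun n =>
    ((Set.Ioo_infinite (by positivity)).diff ((hbadFin r).union (hbadFin t))).nonempty
  choose η hη using hchoice
  have hηpos : ∀ n, 0 < η n := fun n => ((hη n).1).1
  have hηle : ∀ n, η n ≤ 1/(n+1) := fun n => ((hη n).1).2.le
  have hηbad : ∀ n, η n ∉ badA ∪ badB := fun n => (hη n).2
  have hηtend : Tendsto η atTop (nhds (0:ℝ)) :=
    squeeze_zero (fun n => (hηpos n).le) hηle tendsto_one_div_add_atTop_nhds_zero_nat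
  -- injectivity of the perturbed root maps
  have hinjA : ∀ n, Function.Injective fun i : Fin MA => r i + (i : ℕ) * ((η n : ℝ):ℂ) := by
    intro n i j hij
    by_contra hne
    exact hηbad n (Or.inl (Set.mem_iUnion.mpr ⟨(i, j), hne, hij⟩))
  have hinjB : ∀ n, Function.Injective fun j : Fin MB => t j + (j : ℕ) * ((η n : ℝ):ℂ) := by
    intro n i j hij
    by_contra hne
    exact hηbad n (Or.inr (Set.mem_iUnion.mpr ⟨(i, j), hne, hij⟩))
  -- the approximating sequences
  refine ⟨fun n => scaledPert c r (η n), fun n => scaledPert d t (η n),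
    fun n => by rw [scaled_natDegree hc, hMA],
    fun n => by rw [scaled_natDegree hd, hMB],
    fun n => by rw [scaled_roots hc]; exact Multiset.Nodup.map (hinjA n) Finset.univ.nodup,
    fun n => by rw [scaled_roots hd]; exact Multiset.Nodup.map (hinjB n) Finset.univ.nodup,
    fun n => scaled_polyNorm_le hc r (η n),
    fun n => scaled_polyNorm_le hd t (η n),
    ?_, ?_, ?_⟩
  · intro k
    have := ((scaled_coeff_continuous c r k).tendsto 0).comp hηtend
    rwa [Function.comp_def, scaled_zero hA_eq hnA] at this
  · intro k
    have := ((scaled_coeff_continuous d t k).tendsto 0).comp hηtend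
    rwa [Function.comp_def, scaled_zero hB_eq hnB] at this
  -- convergence of δ
  · haveI : Nonempty (Fin MA ⊕ Fin MB) := ⟨Sum.inl (Classical.arbitrary _)⟩
    set g : ℝ → (Fin MA ⊕ Fin MB) → ℂ := fun ηv x =>
      Sum.elim (fun i : Fin MA => r i + (i : ℕ) * ((ηv : ℝ):ℂ))
        (fun j : Fin MB => t j + (j : ℕ) * ((ηv : ℝ):ℂ)) x with hg_def
    set D : ℝ → ℝ := fun ηv => Finset.univ.inf' Finset.univ_nonempty
      (fun x : Fin MA ⊕ Fin MB =>
        ‖(scaledPert c r ηv).eval (g ηv x)‖ +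
        ‖(scaledPert d t ηv).eval (g ηv x)‖) with hD_def
    have key : ∀ ηv : ℝ,
        bezoutDelta (scaledPert c r ηv) (scaledPert d t ηv) = D ηv := by
      intro ηv
      have hset : {z : ℂ | (scaledPert c r ηv).eval z = 0 ∨ (scaledPert d t ηv).eval z = 0}
          = Set.range (g ηv) := by
        ext z
        simp only [Set.mem_setOf_eq, scaled_root_iff hc, scaled_root_iff hd, Set.mem_range]
        constructor
        · rintro (⟨i, hi⟩ | ⟨j, hj⟩)
          · exact ⟨Sum.inl i, hi⟩
          · exact ⟨Sum.inr j, hj⟩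
        · rintro ⟨(i | j), hx⟩
          · exact Or.inl ⟨i, hx⟩
          · exact Or.inr ⟨j, hx⟩
      have hD' : D ηv = sInf ((fun x : Fin MA ⊕ Fin MB =>
          ‖(scaledPert c r ηv).eval (g ηv x)‖ +
          ‖(scaledPert d t ηv).eval (g ηv x)‖) ''
          ↑(Finset.univ : Finset (Fin MA ⊕ Fin MB))) :=
        Finset.inf'_eq_csInf_image _ _ _
      rw [bezoutDelta, hset, hD', Finset.coe_univ, Set.image_univ]
      congr 1
      rw [← Set.range_comp]
      rfl
    have hDcont : Continuous D := by
      apply continuous_finset_inf'' Finset.univ_nonempty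
      rintro (i | j)
      · exact (continuous_norm.comp (scaled_eval_continuous c r (r i) (i:ℕ))).add
          (continuous_norm.comp (scaled_eval_continuous d t (r i) (i:ℕ)))
      · exact (continuous_norm.comp (scaled_eval_continuous c r (t j) (j:ℕ))).add
          (continuous_norm.comp (scaled_eval_continuous d t (t j) (j:ℕ)))
    have hD0 : D 0 = bezoutDelta A B := by
      rw [← key 0, scaled_zero hA_eq hnA, scaled_zero hB_eq hnB]
    have := (hDcont.tendsto 0).comp hηtend
    rw [Function.comp_def, hD0] at this
    simpa only [key] using this
end

section
/- Let α_1, …, α_N and β_1, …, β_K be complex numbers (N, K ≥ 1). Define E_A := ∩_{j=1}^K ∪_{i=1}^N D(α_i, |β_j − α_i|/3) and E_B := ∩_{i=1}^N ∪_{j=1}^K D(β_j, |α_i − β_j|/3), where D(a, r) := {z ∈ ℂ : |z − a| < r}. Then E_A ∩ E_B = ∅. -/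
/-- **Disjointness of the disk regions.** For complex numbers `α₁, …, α_N` and
`β₁, …, β_K`, the sets
`E_A = ∩ⱼ ∪ᵢ D(αᵢ, |βⱼ - αᵢ|/3)` and `E_B = ∩ᵢ ∪ⱼ D(βⱼ, |αᵢ - βⱼ|/3)` are disjoint. -/
theorem disk_regions_disjoint (N K : ℕ) (hN : 1 ≤ N) (hK : 1 ≤ K)
    (α : Fin N → ℂ) (β : Fin K → ℂ) :
    (⋂ j : Fin K, ⋃ i : Fin N, Metric.ball (α i) (‖β j - α i‖ / 3)) ∩
      (⋂ i : Fin N, ⋃ j : Fin K, Metric.ball (β j) (‖α i - β j‖ / 3)) = ∅ := by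
  rw [Set.eq_empty_iff_forall_notMem]
  rintro z ⟨hA, hB⟩
  simp only [Set.mem_iInter, Set.mem_iUnion, Metric.mem_ball] at hA hB
  have hNe : (Finset.univ : Finset (Fin N)).Nonempty := ⟨⟨0, hN⟩, Finset.mem_univ _⟩
  have hKe : (Finset.univ : Finset (Fin K)).Nonempty := ⟨⟨0, hK⟩, Finset.mem_univ _⟩
  obtain ⟨i₀, -, hi₀⟩ := Finset.exists_min_image Finset.univ (fun i => dist z (α i)) hNe
  obtain ⟨j₀, -, hj₀⟩ := Finset.exists_min_image Finset.univ (fun j => dist z (β j)) hKe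
  rcases le_total (dist z (α i₀)) (dist z (β j₀)) with h | h
  · obtain ⟨j, hj⟩ := hB i₀
    have h1 : dist z (β j) < dist (α i₀) (β j) / 3 := by
      rw [Complex.dist_eq, Complex.dist_eq]; rwa [Complex.dist_eq] at hj
    have h2 : dist (α i₀) (β j) ≤ dist (α i₀) z + dist z (β j) := dist_triangle _ _ _
    have h3 := hj₀ j (Finset.mem_univ j)
    have h4 : dist (α i₀) z = dist z (α i₀) := dist_comm _ _
    have h5 : (0:ℝ) ≤ dist z (α i₀) := dist_nonneg
    linarith
  · obtain ⟨i, hi⟩ := hA j₀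
    have h1 : dist z (α i) < dist (β j₀) (α i) / 3 := by
      rw [Complex.dist_eq, Complex.dist_eq]; rwa [Complex.dist_eq] at hi
    have h2 : dist (β j₀) (α i) ≤ dist (β j₀) z + dist z (α i) := dist_triangle _ _ _
    have h3 := hi₀ i (Finset.mem_univ i)
    have h4 : dist (β j₀) z = dist z (β j₀) := dist_comm _ _
    have h5 : (0:ℝ) ≤ dist z (α i₀) := dist_nonneg
    linarith
end

section
/- Let A be a complex polynomial of degree N ≥ 1 with roots α_1, …, α_N (with multiplicity) and let β_1, …, β_K (K ≥ 1) be complex numbers with δ := min_{1 ≤ j ≤ K} |A(β_j)| > 0. Then the sub-level set L(A, δ/3^N) := {z ∈ ℂ : |A(z)| < δ/3^N} is contained in E_A := ∩_{j=1}^K ∪_{i=1}^N D(α_i, |β_j − α_i|/3), where D(a, r) := {z ∈ ℂ : |z − a| < r}. -/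
open Polynomial

/-- **Sub-level set inclusion.** Let `A` have degree `N ≥ 1` with roots `α₁, …, α_N`
(with multiplicity), let `β₁, …, β_K` be complex numbers, and let
`δ = minⱼ |A(βⱼ)| > 0`. Then `L(A, δ/3^N) ⊆ E_A = ∩ⱼ ∪ᵢ D(αᵢ, |βⱼ - αᵢ|/3)`. -/
theorem sublevel_subset_disks (N K : ℕ) (hN : 1 ≤ N) (hK : 1 ≤ K)
    (aN : ℂ) (haN : aN ≠ 0) (α : Fin N → ℂ) (β : Fin K → ℂ)
    (A : Polynomial ℂ)
    (hA : A = Polynomial.C aN * ∏ i : Fin N, (Polynomial.X - Polynomial.C (α i)))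
    (δ : ℝ)
    (hδ : δ = Finset.univ.inf' ⟨⟨0, hK⟩, Finset.mem_univ _⟩
      (fun j : Fin K => ‖A.eval (β j)‖))
    (hδpos : 0 < δ) :
    {z : ℂ | ‖A.eval z‖ < δ / 3 ^ N} ⊆
      ⋂ j : Fin K, ⋃ i : Fin N, Metric.ball (α i) (‖β j - α i‖ / 3) := by
  intro z hz
  simp only [Set.mem_setOf_eq] at hz
  rw [Set.mem_iInter]
  intro j
  rw [Set.mem_iUnion]
  by_contra h
  push_neg at h
  simp only [Metric.mem_ball, not_lt, Complex.dist_eq] at h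
  have key : ‖A.eval (β j)‖ ≤ 3 ^ N * ‖A.eval z‖ := by
    rw [hA]
    simp only [Polynomial.eval_mul, Polynomial.eval_C, Polynomial.eval_prod,
      Polynomial.eval_sub, Polynomial.eval_X, map_mul, map_prod, norm_mul, norm_prod]
    have h1 : ∏ i, ‖β j - α i‖ ≤ ∏ i, (3 * ‖z - α i‖) := by
      apply Finset.prod_le_prod
      · intro i _; positivity
      · intro i _
        have := h i
        linarith
    calc ‖aN‖ * ∏ i, ‖β j - α i‖
        ≤ ‖aN‖ * ∏ i, (3 * ‖z - α i‖) :=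
          mul_le_mul_of_nonneg_left h1 (norm_nonneg _)
      _ = 3 ^ N * (‖aN‖ * ∏ i, ‖z - α i‖) := by
          rw [Finset.prod_mul_distrib, Finset.prod_const, Finset.card_univ,
            Fintype.card_fin]
          ring
  have hδle : δ ≤ ‖A.eval (β j)‖ := by
    rw [hδ]; exact Finset.inf'_le _ (Finset.mem_univ j)
  have h3 : (0:ℝ) < 3 ^ N := pow_pos (by norm_num) N
  rw [lt_div_iff₀ h3] at hz
  nlinarith
end

section
/- Let N ≥ 1 be an integer, 0 < a < 1, and w := e^{2πi/(2N−1)}. Set A(z) := z^N, B(z) := ∏_{j=1}^N (z − a w^j), R(z) := a^{−(2N−1)} z^{N−1}, and S(z) := −a^{−(2N−1)} ∏_{j=N+1}^{2N−1} (z − a w^j). Then A(z) R(z) + B(z) S(z) = 1 for all z ∈ ℂ, δ(A,B) = a^N, and ‖R‖ = a^{−(2N−1)} = δ(A,B)^{−2 + 1/N}. -/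
open Polynomial

/-- **Optimality example.** For `N ≥ 1`, `0 < a < 1` and `w = e^{2πi/(2N-1)}`, the
polynomials `A = z^N`, `B = ∏_{j=1}^N (z - a wʲ)`, `R = a^{-(2N-1)} z^{N-1}` and
`S = -a^{-(2N-1)} ∏_{j=N+1}^{2N-1} (z - a wʲ)` satisfy `A R + B S = 1`, `δ(A,B) = a^N`,
and `‖R‖ = a^{-(2N-1)} = δ(A,B)^{-2 + 1/N}`. -/
theorem optimality_example (N : ℕ) (hN : 1 ≤ N) (a : ℝ) (ha0 : 0 < a) (ha1 : a < 1)
    (w : ℂ) (hw : w = Complex.exp (2 * Real.pi * Complex.I / (2 * (N : ℂ) - 1)))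
    (A B R S : Polynomial ℂ)
    (hA : A = Polynomial.X ^ N)
    (hB : B = ∏ j ∈ Finset.Icc 1 N, (Polynomial.X - Polynomial.C ((a : ℂ) * w ^ j)))
    (hR : R = Polynomial.C (((a : ℂ) ^ (2 * N - 1))⁻¹) * Polynomial.X ^ (N - 1))
    (hS : S = -Polynomial.C (((a : ℂ) ^ (2 * N - 1))⁻¹) *
      ∏ j ∈ Finset.Icc (N + 1) (2 * N - 1), (Polynomial.X - Polynomial.C ((a : ℂ) * w ^ j))) :
    (∀ z : ℂ, A.eval z * R.eval z + B.eval z * S.eval z = 1) ∧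
    bezoutDelta A B = a ^ N ∧
    polyNorm R = (a ^ (2 * N - 1))⁻¹ ∧
    (a ^ (2 * N - 1))⁻¹ = bezoutDelta A B ^ ((-2 : ℝ) + 1 / (N : ℝ)) := by
  have hn0 : (2 * N - 1) ≠ 0 := by omega
  have hcast : (2 * (N : ℂ) - 1) = ((2 * N - 1 : ℕ) : ℂ) := by
    push_cast [Nat.cast_sub (by omega : 1 ≤ 2 * N)]; ring
  have hprim : IsPrimitiveRoot w (2 * N - 1) := by
    rw [hw, hcast]; exact Complex.isPrimitiveRoot_exp _ hn0
  have habsw : ‖w‖ = 1 := by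
    have harg : (2 * Real.pi * Complex.I / (2 * (N : ℂ) - 1))
        = ((2 * Real.pi / (2 * N - 1 : ℕ) : ℝ) : ℂ) * Complex.I := by
      rw [hcast]
      have : ((2 * N - 1 : ℕ) : ℂ) ≠ 0 := by exact_mod_cast hn0
      field_simp
      push_cast; field_simp
    rw [hw, harg, Complex.norm_exp_ofReal_mul_I]
  have ha0' : (a : ℂ) ≠ 0 := by exact_mod_cast ha0.ne'
  set c : ℂ := ((a : ℂ) ^ (2 * N - 1))⁻¹ with hc_def
  -- key factorization
  have key : ∏ j ∈ Finset.Icc 1 (2 * N - 1), (X - C ((a : ℂ) * w ^ j))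
      = X ^ (2 * N - 1) - C ((a : ℂ) ^ (2 * N - 1)) := by
    have e : ((a : ℂ) * w) ^ (2 * N - 1) = (a : ℂ) ^ (2 * N - 1) := by
      rw [mul_pow, hprim.pow_eq_one, mul_one]
    rw [X_pow_sub_C_eq_prod hprim (by omega) e, ← Finset.Ico_add_one_right_eq_Icc,
      Finset.prod_Ico_eq_prod_range]
    have hh : 2 * N - 1 + 1 - 1 = 2 * N - 1 := rfl
    rw [hh]
    refine Finset.prod_congr rfl fun i _ => ?_
    congr 1
    rw [add_comm 1 i, pow_succ]
    ring
  have hsplit : B * ∏ j ∈ Finset.Icc (N + 1) (2 * N - 1), (X - C ((a : ℂ) * w ^ j))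
      = X ^ (2 * N - 1) - C ((a : ℂ) ^ (2 * N - 1)) := by
    rw [hB, ← key,
      show Finset.Icc 1 N = Finset.Ioc 0 N from Finset.Icc_add_one_left_eq_Ioc 0 N,
      show Finset.Icc (N + 1) (2 * N - 1) = Finset.Ioc N (2 * N - 1) from
        Finset.Icc_add_one_left_eq_Ioc N (2 * N - 1),
      show Finset.Icc 1 (2 * N - 1) = Finset.Ioc 0 (2 * N - 1) from
        Finset.Icc_add_one_left_eq_Ioc 0 (2 * N - 1)]
    exact Finset.prod_Ioc_consecutive _ (by omega) (by omega)
  have hc1 : c * (a : ℂ) ^ (2 * N - 1) = 1 := inv_mul_cancel₀ (pow_ne_zero _ ha0')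
  have hpoly : A * R + B * S = 1 := by
    rw [hA, hR, hS, neg_mul, mul_neg, ← mul_assoc B, mul_comm B (C c), mul_assoc, hsplit]
    have hXX : X ^ N * (C c * X ^ (N - 1)) = C c * X ^ (2 * N - 1) := by
      rw [mul_left_comm, ← pow_add, show N + (N - 1) = 2 * N - 1 from by omega]
    rw [hXX,
      show C c * X ^ (2*N-1) + -(C c * (X ^ (2*N-1) - C ((a:ℂ) ^ (2*N-1))))
        = C c * C ((a:ℂ) ^ (2*N-1)) from by ring,
      ← C_mul, hc1, map_one]
  have part1 : ∀ z : ℂ, A.eval z * R.eval z + B.eval z * S.eval z = 1 := by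
    intro z
    have := congrArg (eval z) hpoly
    simpa using this
  -- δ computation
  have hBz : ∀ z : ℂ, B.eval z = ∏ j ∈ Finset.Icc 1 N, (z - (a : ℂ) * w ^ j) := by
    intro z; rw [hB, eval_prod]; simp
  have habsterm : ∀ (z : ℂ), ∀ j, ‖(a : ℂ) * w ^ j‖ = a := by
    intro z j
    rw [norm_mul, norm_pow, habsw, one_pow, mul_one, Complex.norm_real, Real.norm_eq_abs, abs_of_pos ha0]
  have habsB0 : ‖B.eval 0‖ = a ^ N := by
    rw [hBz, norm_prod]
    rw [Finset.prod_congr rfl (fun j _ => by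
      rw [zero_sub, norm_neg, habsterm 0 j] : ∀ j ∈ Finset.Icc 1 N,
        ‖(0 : ℂ) - (a : ℂ) * w ^ j‖ = a)]
    rw [Finset.prod_const, Nat.card_Icc, Nat.add_sub_cancel]
  have hNne : N ≠ 0 := by omega
  have himg : (fun z : ℂ => ‖A.eval z‖ + ‖B.eval z‖) ''
      {z : ℂ | A.eval z = 0 ∨ B.eval z = 0} = {(a : ℝ) ^ N} := by
    apply Set.eq_singleton_iff_unique_mem.mpr
    constructor
    · refine ⟨0, Or.inl (by simp [hA, zero_pow hNne]), ?_⟩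
      show ‖eval 0 A‖ + ‖eval 0 B‖ = a ^ N
      rw [habsB0, hA]
      simp [zero_pow hNne]
    · rintro x ⟨z, hz, rfl⟩
      rcases hz with hz | hz
      · have hz0 : z = 0 := pow_eq_zero_iff hNne |>.mp (by rw [hA] at hz; simpa using hz)
        show ‖eval z A‖ + ‖eval z B‖ = a ^ N
        subst hz0
        rw [habsB0, hA]
        simp [zero_pow hNne]
      · have hz' := hz
        rw [hBz] at hz'
        obtain ⟨j, hj, hj0⟩ := Finset.prod_eq_zero_iff.mp hz'
        have hzj : z = (a : ℂ) * w ^ j := by linear_combination hj0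
        show ‖eval z A‖ + ‖eval z B‖ = a ^ N
        rw [hz, hA]
        simp only [eval_pow, eval_X, norm_pow, norm_zero, add_zero]
        rw [hzj, habsterm z j]
  have part2 : bezoutDelta A B = a ^ N := by
    rw [bezoutDelta, himg, csInf_singleton]
  -- polyNorm
  have habsc : ‖c‖ = (a ^ (2 * N - 1))⁻¹ := by
    rw [hc_def, norm_inv, norm_pow, Complex.norm_real, Real.norm_eq_abs, abs_of_pos ha0]
  have hRcoeff : ∀ k, ‖R.coeff k‖
      = if k = N - 1 then (a ^ (2 * N - 1))⁻¹ else 0 := by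
    intro k
    rw [hR, coeff_C_mul, coeff_X_pow]
    split_ifs with h
    · rw [mul_one, habsc]
    · simp
  have hinvpos : (0 : ℝ) < (a ^ (2 * N - 1))⁻¹ := by positivity
  have hbdd : BddAbove (Set.range fun k => ‖R.coeff k‖) := by
    refine ⟨(a ^ (2 * N - 1))⁻¹, ?_⟩
    rintro x ⟨k, rfl⟩
    show ‖R.coeff k‖ ≤ _
    rw [hRcoeff]
    split_ifs
    · exact le_refl _
    · exact hinvpos.le
  have part3 : polyNorm R = (a ^ (2 * N - 1))⁻¹ := by
    unfold polyNorm
    apply le_antisymm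
    · apply ciSup_le
      intro k
      show ‖R.coeff k‖ ≤ _
      rw [hRcoeff]
      split_ifs
      · exact le_refl _
      · exact hinvpos.le
    · rw [show (a ^ (2 * N - 1))⁻¹ = ‖R.coeff (N - 1)‖ from by
        rw [hRcoeff, if_pos rfl]]
      exact le_ciSup hbdd (N - 1)
  -- rpow identity
  have hNR : ((N : ℝ)) ≠ 0 := Nat.cast_ne_zero.mpr hNne
  have part4 : (a ^ (2 * N - 1))⁻¹ = ((a : ℝ) ^ N) ^ ((-2 : ℝ) + 1 / (N : ℝ)) := by
    rw [← Real.rpow_natCast a N, ← Real.rpow_mul ha0.le]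
    have hexp : (N : ℝ) * ((-2 : ℝ) + 1 / (N : ℝ)) = -(((2 * N - 1 : ℕ) : ℝ)) := by
      push_cast [Nat.cast_sub (by omega : 1 ≤ 2 * N)]
      field_simp
      ring
    rw [hexp, Real.rpow_neg ha0.le, Real.rpow_natCast]
  exact ⟨part1, part2, part3, by rw [part2]; exact part4⟩
end
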